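/- Let G₁ = (V₁, E₁) and G₂ = (V₂, E₂) be finite simple graphs on disjoint vertex sets, let G₁G₂ denote their disjoint union, let f : G₁G₂ → K_n be a graph homomorphism (n ≥ |V₁| + |V₂|), and let f₁, f₂ be the restrictions of f to V₁ and V₂. Then r(f) ≥ r(f₁) + r(f₂). -/

import Mathlib

open MeasureTheory

noncomputable section

open scoped Classical in
/-- A graph homomorphism `f : G → H` is even if for every edge `e` of `H`, the number of
edges of `G` mapped by `f` onto `e` is even. -/
def IsEvenHom {V V' : Type} [Fintype V] [Fintype V'] {G : SimpleGraph V} {H : SimpleGraph V'}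
    (f : G →g H) : Prop :=
  ∀ e ∈ H.edgeFinset, Even ((G.edgeFinset.filter (fun e' => Sym2.map (⇑f) e' = e)).card)

open scoped Classical in
/-- The set of `f`-odd vertices of `K_n`: those incident with an edge having an odd number
of preimage edges under `f`. -/
noncomputable def oddVerts {V : Type} [Fintype V] {G : SimpleGraph V} {n : ℕ}
    (f : G →g (⊤ : SimpleGraph (Fin n))) : Finset (Fin n) :=
  Finset.univ.filter (fun v => ∃ e ∈ (⊤ : SimpleGraph (Fin n)).edgeFinset,
    Odd ((G.edgeFinset.filter (fun e' => Sym2.map (⇑f) e' = e)).card) ∧ v ∈ e)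

open scoped Classical in
/-- `r(f) = |V(G)| − |f(V(G))| + |V_odd(f)|/2`. -/
noncomputable def rval {V : Type} [Fintype V] {G : SimpleGraph V} {n : ℕ}
    (f : G →g (⊤ : SimpleGraph (Fin n))) : ℝ :=
  (Fintype.card V : ℝ) - ((Finset.univ.image ⇑f).card : ℝ) + ((oddVerts f).card : ℝ) / 2

/-- `r̄(G) = min { r(f) : f : G → K_n }`. -/
noncomputable def rbar {V : Type} [Fintype V] (G : SimpleGraph V) (n : ℕ) : ℝ :=
  sInf {x : ℝ | ∃ f : G →g (⊤ : SimpleGraph (Fin n)), rval f = x}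

open scoped Classical in
/-- `p(G) = min { |V(G)| − |f(V(G))| : f : G → K_n even }`. -/
noncomputable def pval {V : Type} [Fintype V] (G : SimpleGraph V) (n : ℕ) : ℝ :=
  sInf {x : ℝ | ∃ f : G →g (⊤ : SimpleGraph (Fin n)), IsEvenHom f ∧
    (Fintype.card V : ℝ) - ((Finset.univ.image ⇑f).card : ℝ) = x}

/-- The disjoint union of `k` copies of `G`. -/
def copies {V : Type} (G : SimpleGraph V) (k : ℕ) : SimpleGraph (Fin k × V) where
  Adj a b := a.1 = b.1 ∧ G.Adj a.2 b.2
  symm := ⟨fun _ _ hab => ⟨hab.1.symm, G.symm.symm _ _ hab.2⟩⟩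
  loopless := ⟨fun a ha => G.loopless.irrefl a.2 ha.2⟩


open scoped Classical

section RvalAux

variable {V₁ V₂ : Type} [Fintype V₁] [Fintype V₂]

private lemma sum_edgeFinset_aux (G₁ : SimpleGraph V₁) (G₂ : SimpleGraph V₂) :
    (G₁.sum G₂).edgeFinset =
      G₁.edgeFinset.map ⟨Sym2.map Sum.inl, Sym2.map.injective Sum.inl_injective⟩ ∪
      G₂.edgeFinset.map ⟨Sym2.map Sum.inr, Sym2.map.injective Sum.inr_injective⟩ := by
  ext e
  refine Sym2.ind (fun x y => ?_) e
  cases x <;> cases y <;>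
    simp only [SimpleGraph.mem_edgeFinset, Finset.mem_union, Finset.mem_map,
      Function.Embedding.coeFn_mk, SimpleGraph.mem_edgeSet, SimpleGraph.sum_adj]
  case inl.inl a b =>
    constructor
    · intro h
      exact Or.inl ⟨s(a, b), by simpa using h, rfl⟩
    · rintro (⟨e', he', hmap⟩ | ⟨e', he', hmap⟩)
      · have : e' = s(a, b) := Sym2.map.injective Sum.inl_injective (by rw [hmap]; rfl)
        subst this; simpa using he'
      · induction e' using Sym2.ind with
        | _ c d => simp [Sym2.map_pair_eq] at hmap
  case inl.inr a b =>
    constructor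
    · exact fun h => h.elim
    · rintro (⟨e', he', hmap⟩ | ⟨e', he', hmap⟩) <;>
        induction e' using Sym2.ind with
        | _ c d => simp [Sym2.map_pair_eq] at hmap
  case inr.inl a b =>
    constructor
    · exact fun h => h.elim
    · rintro (⟨e', he', hmap⟩ | ⟨e', he', hmap⟩) <;>
        induction e' using Sym2.ind with
        | _ c d => simp [Sym2.map_pair_eq] at hmap
  case inr.inr a b =>
    constructor
    · intro h
      exact Or.inr ⟨s(a, b), by simpa using h, rfl⟩
    · rintro (⟨e', he', hmap⟩ | ⟨e', he', hmap⟩)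
      · induction e' using Sym2.ind with
        | _ c d => simp [Sym2.map_pair_eq] at hmap
      · have : e' = s(a, b) := Sym2.map.injective Sum.inr_injective (by rw [hmap]; rfl)
        subst this; simpa using he'

private lemma count_sum_aux (G₁ : SimpleGraph V₁) (G₂ : SimpleGraph V₂) {n : ℕ}
    (f : (G₁.sum G₂) →g (⊤ : SimpleGraph (Fin n)))
    (f₁ : G₁ →g (⊤ : SimpleGraph (Fin n))) (hf₁ : f₁ = f.comp ⟨Sum.inl, fun h => h⟩)
    (f₂ : G₂ →g (⊤ : SimpleGraph (Fin n))) (hf₂ : f₂ = f.comp ⟨Sum.inr, fun h => h⟩)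
    (e : Sym2 (Fin n)) :
    ((G₁.sum G₂).edgeFinset.filter (fun e' => Sym2.map (⇑f) e' = e)).card =
      (G₁.edgeFinset.filter (fun e' => Sym2.map (⇑f₁) e' = e)).card +
      (G₂.edgeFinset.filter (fun e' => Sym2.map (⇑f₂) e' = e)).card := by
  rw [sum_edgeFinset_aux, Finset.filter_union, Finset.card_union_of_disjoint, Finset.filter_map,
    Finset.filter_map, Finset.card_map, Finset.card_map]
  · congr 1
    · refine congrArg Finset.card (Finset.filter_congr ?_)
      intro e' _
      simp only [Function.comp_apply, Function.Embedding.coeFn_mk, Sym2.map_map, hf₁]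
      rfl
    · refine congrArg Finset.card (Finset.filter_congr ?_)
      intro e' _
      simp only [Function.comp_apply, Function.Embedding.coeFn_mk, Sym2.map_map, hf₂]
      rfl
  · apply Finset.disjoint_filter_filter
    rw [Finset.disjoint_left]
    rintro x hx hx'
    simp only [Finset.mem_map, Function.Embedding.coeFn_mk] at hx hx'
    obtain ⟨a, -, rfl⟩ := hx
    obtain ⟨b, -, hb⟩ := hx'
    induction a using Sym2.ind with
    | _ c d =>
      induction b using Sym2.ind with
      | _ u v => simp [Sym2.map_pair_eq, Sym2.eq, Sym2.rel_iff'] at hb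

private lemma mem_image_of_odd_aux {V : Type} [Fintype V] {G : SimpleGraph V} {n : ℕ}
    (g : G →g (⊤ : SimpleGraph (Fin n))) {e : Sym2 (Fin n)} {v : Fin n}
    (h : Odd ((G.edgeFinset.filter (fun e' => Sym2.map (⇑g) e' = e)).card)) (hv : v ∈ e) :
    v ∈ Finset.univ.image ⇑g := by
  have hne : (G.edgeFinset.filter (fun e' => Sym2.map (⇑g) e' = e)).Nonempty := by
    rw [Finset.nonempty_iff_ne_empty]
    intro hemp
    rw [hemp] at h
    simp at h
  obtain ⟨e', he'⟩ := hne
  rw [Finset.mem_filter] at he'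
  obtain ⟨-, hmap⟩ := he'
  induction e' using Sym2.ind with
  | _ a b =>
    rw [Sym2.map_pair_eq] at hmap
    subst hmap
    rw [Sym2.mem_iff] at hv
    rcases hv with rfl | rfl <;> exact Finset.mem_image_of_mem _ (Finset.mem_univ _)

end RvalAux

/-- Superadditivity of `r` over a disjoint union: if `f : G₁G₂ → K_n` restricts to `f₁`
and `f₂` on the two components, then `r(f) ≥ r(f₁) + r(f₂)`. -/
theorem rval_superadditive {V₁ V₂ : Type} [Fintype V₁] [Fintype V₂]
    (G₁ : SimpleGraph V₁) (G₂ : SimpleGraph V₂) {n : ℕ}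
    (hn : Fintype.card V₁ + Fintype.card V₂ ≤ n)
    (f : (G₁.sum G₂) →g (⊤ : SimpleGraph (Fin n)))
    (f₁ : G₁ →g (⊤ : SimpleGraph (Fin n))) (hf₁ : f₁ = f.comp ⟨Sum.inl, fun h => h⟩)
    (f₂ : G₂ →g (⊤ : SimpleGraph (Fin n))) (hf₂ : f₂ = f.comp ⟨Sum.inr, fun h => h⟩) :
    rval f₁ + rval f₂ ≤ rval f := by
  have hcl : ∀ a, f₁ a = f (Sum.inl a) := fun a => by rw [hf₁]; rfl
  have hcr : ∀ a, f₂ a = f (Sum.inr a) := fun a => by rw [hf₂]; rfl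
  set A := oddVerts f₁ with hA
  set B := oddVerts f₂ with hB
  set C := oddVerts f with hC
  set I := (Finset.univ.image ⇑f₁) ∩ (Finset.univ.image ⇑f₂) with hI
  have himg : Finset.univ.image ⇑f = Finset.univ.image ⇑f₁ ∪ Finset.univ.image ⇑f₂ := by
    ext v
    simp only [Finset.mem_image, Finset.mem_union, Finset.mem_univ, true_and]
    constructor
    · rintro ⟨x, rfl⟩
      cases x with
      | inl a => exact Or.inl ⟨a, (hcl a)⟩
      | inr a => exact Or.inr ⟨a, (hcr a)⟩
    · rintro (⟨a, rfl⟩ | ⟨a, rfl⟩)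
      exacts [⟨Sum.inl a, (hcl a).symm⟩, ⟨Sum.inr a, (hcr a).symm⟩]
  have hCsub : C ⊆ A ∪ B := by
    intro v hv
    rw [hC, oddVerts, Finset.mem_filter] at hv
    obtain ⟨-, e, he, hodd, hve⟩ := hv
    rw [count_sum_aux G₁ G₂ f f₁ hf₁ f₂ hf₂ e] at hodd
    by_cases h1 : Odd ((G₁.edgeFinset.filter (fun e' => Sym2.map (⇑f₁) e' = e)).card)
    · have : v ∈ A := by
        rw [hA, oddVerts, Finset.mem_filter]
        exact ⟨Finset.mem_univ _, e, he, h1, hve⟩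
      exact Finset.mem_union_left _ this
    · have h2 : Odd ((G₂.edgeFinset.filter (fun e' => Sym2.map (⇑f₂) e' = e)).card) := by
        rw [Nat.odd_iff] at hodd ⊢
        rw [Nat.not_odd_iff_even, Nat.even_iff] at h1
        omega
      have : v ∈ B := by
        rw [hB, oddVerts, Finset.mem_filter]
        exact ⟨Finset.mem_univ _, e, he, h2, hve⟩
      exact Finset.mem_union_right _ this
  have hdiff : ∀ v ∈ A ∪ B, v ∉ C → v ∈ I := by
    intro v hv hvC
    have key : ∀ e ∈ (⊤ : SimpleGraph (Fin n)).edgeFinset, v ∈ e →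
        ¬ Odd (((G₁.sum G₂).edgeFinset.filter (fun e' => Sym2.map (⇑f) e' = e)).card) := by
      intro e he hve hodd
      apply hvC
      rw [hC, oddVerts, Finset.mem_filter]
      exact ⟨Finset.mem_univ _, e, he, hodd, hve⟩
    rw [Finset.mem_union] at hv
    rw [hI, Finset.mem_inter]
    rcases hv with hv | hv
    · rw [hA, oddVerts, Finset.mem_filter] at hv
      obtain ⟨-, e, he, hodd1, hve⟩ := hv
      have hev := key e he hve
      rw [count_sum_aux G₁ G₂ f f₁ hf₁ f₂ hf₂ e] at hev
      have hodd2 : Odd ((G₂.edgeFinset.filter (fun e' => Sym2.map (⇑f₂) e' = e)).card) := by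
        rw [Nat.not_odd_iff_even, Nat.even_iff] at hev
        rw [Nat.odd_iff] at hodd1 ⊢
        omega
      exact ⟨mem_image_of_odd_aux f₁ hodd1 hve, mem_image_of_odd_aux f₂ hodd2 hve⟩
    · rw [hB, oddVerts, Finset.mem_filter] at hv
      obtain ⟨-, e, he, hodd2, hve⟩ := hv
      have hev := key e he hve
      rw [count_sum_aux G₁ G₂ f f₁ hf₁ f₂ hf₂ e] at hev
      have hodd1 : Odd ((G₁.edgeFinset.filter (fun e' => Sym2.map (⇑f₁) e' = e)).card) := by
        rw [Nat.not_odd_iff_even, Nat.even_iff] at hev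
        rw [Nat.odd_iff] at hodd2 ⊢
        omega
      exact ⟨mem_image_of_odd_aux f₁ hodd1 hve, mem_image_of_odd_aux f₂ hodd2 hve⟩
  have hcap : A ∩ B ⊆ I := by
    intro v hv
    rw [Finset.mem_inter] at hv
    obtain ⟨hvA, hvB⟩ := hv
    rw [hA, oddVerts, Finset.mem_filter] at hvA
    rw [hB, oddVerts, Finset.mem_filter] at hvB
    obtain ⟨-, e1, -, ho1, hv1⟩ := hvA
    obtain ⟨-, e2, -, ho2, hv2⟩ := hvB
    rw [hI, Finset.mem_inter]
    exact ⟨mem_image_of_odd_aux f₁ ho1 hv1, mem_image_of_odd_aux f₂ ho2 hv2⟩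
  have hcards : A.card + B.card ≤ C.card + 2 * I.card := by
    have h1 : (A ∪ B).card + (A ∩ B).card = A.card + B.card :=
      Finset.card_union_add_card_inter A B
    have h2 : (A ∪ B).card ≤ C.card + I.card := by
      have hsub : A ∪ B ⊆ C ∪ I := by
        intro v hv
        by_cases hvC : v ∈ C
        · exact Finset.mem_union_left _ hvC
        · exact Finset.mem_union_right _ (hdiff v hv hvC)
      calc (A ∪ B).card ≤ (C ∪ I).card := Finset.card_le_card hsub
        _ ≤ C.card + I.card := Finset.card_union_le _ _
    have h3 : (A ∩ B).card ≤ I.card := Finset.card_le_card hcap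
    omega
  have himgcard : (Finset.univ.image ⇑f).card + I.card =
      (Finset.univ.image ⇑f₁).card + (Finset.univ.image ⇑f₂).card := by
    rw [himg, hI]
    exact Finset.card_union_add_card_inter _ _
  have hc' : (A.card : ℝ) + (B.card : ℝ) ≤ (C.card : ℝ) + 2 * (I.card : ℝ) := by
    exact_mod_cast hcards
  have hi' : ((Finset.univ.image ⇑f).card : ℝ) + (I.card : ℝ) =
      ((Finset.univ.image ⇑f₁).card : ℝ) + ((Finset.univ.image ⇑f₂).card : ℝ) := by
    exact_mod_cast himgcard
  simp only [rval, Fintype.card_sum, ← hA, ← hB, ← hC]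
  push_cast
  linarith
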